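/- arXiv:2212.11969 — 2 statements merged into one kernel-verified Lean document; each statement's English description precedes it below -/
import Mathlib

section
/- For every digraph D, inv(D) ≤ 2·τ(D), where τ(D) is the cycle transversal (feedback vertex set) number of D. -/
/-- Inverting a set `X` in a digraph `D`: edges with both endpoints in `X`
are reversed, all other edges are unchanged. -/
def Invert {V : Type*} (D : V → V → Prop) (X : Set V) : V → V → Prop :=
  fun u v => (u ∈ X ∧ v ∈ X ∧ D v u) ∨ (¬(u ∈ X ∧ v ∈ X) ∧ D u v)

/-- A digraph is acyclic if it has no directed cycle. -/
def IsAcyclic {V : Type*} (D : V → V → Prop) : Prop :=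
  ∀ x : V, ¬ Relation.TransGen D x x

/-- A loopless digraph without digons (an oriented graph). -/
def IsOriented {V : Type*} (D : V → V → Prop) : Prop :=
  ∀ u v, D u v → ¬ D v u

/-- A tournament: an oriented graph with exactly one edge between any two
distinct vertices. -/
def IsTournament {V : Type*} (D : V → V → Prop) : Prop :=
  (∀ u v, D u v → ¬ D v u) ∧ ∀ u v, u ≠ v → D u v ∨ D v u

/-- The inversion number of a digraph: the minimum length of a decycling
family, i.e. a sequence of sets whose successive inversion makes `D` acyclic. -/
noncomputable def invNum {V : Type*} (D : V → V → Prop) : ℕ :=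
  sInf {k | ∃ Xs : List (Set V), Xs.length = k ∧ IsAcyclic (Xs.foldl Invert D)}

/-- The cycle transversal (feedback vertex set) number of a digraph. -/
noncomputable def tau {V : Type*} (D : V → V → Prop) : ℕ :=
  sInf {k | ∃ S : Finset V, S.card = k ∧
    IsAcyclic (fun a b : {u : V // u ∉ S} => D a b)}

section Aux
variable {V : Type*}

lemma invert_oriented {D : V → V → Prop} (hD : IsOriented D) (X : Set V) :
    IsOriented (Invert D X) := by
  intro u v huv hvu
  have h1 := hD u v
  have h2 := hD v u
  unfold Invert at huv hvu
  tauto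

lemma exists_head {r : V → V → Prop} {x y : V} (h : Relation.TransGen r x y) :
    ∃ c, r x c := by
  induction h with
  | single h => exact ⟨_, h⟩
  | tail _ _ ih => exact ih

lemma avoid {r : V → V → Prop} {a : V} (ha : ∀ w, ¬ r a w) {x y : V} (hx : x ≠ a)
    (h : Relation.TransGen r x y) :
    y ≠ a → Relation.TransGen (fun u w => r u w ∧ u ≠ a ∧ w ≠ a) x y := by
  induction h with
  | single h => exact fun hy => .single ⟨h, hx, hy⟩
  | @tail b c h1 h2 ih =>
    intro hy
    have hc : b ≠ a := fun he => ha _ (by rwa [he] at h2)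
    exact (ih hc).tail ⟨h2, hc, hy⟩

lemma sink_lemma {D : V → V → Prop} (hD : IsOriented D) (a w : V) :
    ¬ Invert (Invert D {u | u = a ∨ D a u}) {u | D a u} a w := by
  have haa : ¬ D a a := fun h => hD a a h h
  have h1 := hD a w
  intro hw
  by_cases hwa : w = a
  · subst hwa
    simp only [Invert, Set.mem_setOf_eq] at hw
    tauto
  · simp only [Invert, Set.mem_setOf_eq] at hw
    tauto

lemma off_lemma {D : V → V → Prop} (a u w : V) (hu : u ≠ a) (hw : w ≠ a) :
    Invert (Invert D {x | x = a ∨ D a x}) {x | D a x} u w ↔ D u w := by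
  simp only [Invert, Set.mem_setOf_eq]
  tauto

lemma lift_sub {D : V → V → Prop} {S : Finset V}
    (hA : IsAcyclic (fun a b : {u : V // u ∉ S} => D a b)) :
    ∀ x, ¬ Relation.TransGen (fun u w => u ∉ S ∧ w ∉ S ∧ D u w) x x := by
  have key : ∀ u w, Relation.TransGen (fun u w => u ∉ S ∧ w ∉ S ∧ D u w) u w →
      ∀ (hu : u ∉ S) (hw : w ∉ S),
        Relation.TransGen (fun a b : {u : V // u ∉ S} => D a.1 b.1) ⟨u, hu⟩ ⟨w, hw⟩ := by
    intro u w h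
    induction h with
    | single h => exact fun hu hw => .single h.2.2
    | tail h1 h2 ih => exact fun hu hw => (ih hu h2.1).tail h2.2.2
  intro x hx
  have hxS : x ∉ S := (exists_head hx).choose_spec.1
  exact hA ⟨x, hxS⟩ (key x x hx hxS hxS)

lemma exists_decycling (S : Finset V) : ∀ (D : V → V → Prop), IsOriented D →
    (∀ x, ¬ Relation.TransGen (fun u w => u ∉ S ∧ w ∉ S ∧ D u w) x x) →
    ∃ Xs : List (Set V), Xs.length = 2 * S.card ∧ IsAcyclic (Xs.foldl Invert D) := by
  classical
  induction S using Finset.induction_on with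
  | empty =>
    intro D hD hA
    refine ⟨[], rfl, fun x hx => hA x (Relation.TransGen.mono (fun u w h => ⟨by simp, by simp, h⟩) x x hx)⟩
  | @insert a S ha ih =>
    intro D hD hA
    set D2 : V → V → Prop := Invert (Invert D {x | x = a ∨ D a x}) {x | D a x} with hD2def
    have hsink : ∀ w, ¬ D2 a w := fun w => sink_lemma hD a w
    have hoff : ∀ u w, u ≠ a → w ≠ a → (D2 u w ↔ D u w) := fun u w hu hw => off_lemma a u w hu hw
    have hD2 : IsOriented D2 := invert_oriented (invert_oriented hD _) _
    have hA2 : ∀ x, ¬ Relation.TransGen (fun u w => u ∉ S ∧ w ∉ S ∧ D2 u w) x x := by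
      intro x hx
      have hnoa : ∀ w, ¬ (a ∉ S ∧ w ∉ S ∧ D2 a w) := fun w h => hsink w h.2.2
      have hx0 : x ≠ a := by
        obtain ⟨c, hc⟩ := exists_head hx
        intro he
        exact hsink c (by rw [he] at hc; exact hc.2.2)
      have h2 := avoid hnoa hx0 hx hx0
      refine hA x (Relation.TransGen.mono (fun u w h => ?_) x x h2)
      refine ⟨?_, ?_, (hoff u w h.2.1 h.2.2).mp h.1.2.2⟩
      · simp only [Finset.mem_insert, not_or]
        exact ⟨h.2.1, h.1.1⟩
      · simp only [Finset.mem_insert, not_or]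
        exact ⟨h.2.2, h.1.2.1⟩
    obtain ⟨Xs, hl, hacyc⟩ := ih D2 hD2 hA2
    refine ⟨{x | x = a ∨ D a x} :: {x | D a x} :: Xs, ?_, ?_⟩
    · simp only [List.length_cons, hl, Finset.card_insert_of_notMem ha]
      ring
    · simpa using hacyc

end Aux

/-- For every digraph `D`, `inv(D) ≤ 2·τ(D)`. -/
theorem invNum_le_two_mul_tau {V : Type*} [Fintype V]
    (D : V → V → Prop) (hD : IsOriented D) :
    invNum D ≤ 2 * tau D := by
  have hne : {k | ∃ S : Finset V, S.card = k ∧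
      IsAcyclic (fun a b : {u : V // u ∉ S} => D a b)}.Nonempty := by
    refine ⟨(Finset.univ : Finset V).card, Finset.univ, rfl, fun x => absurd x.2 (by simp)⟩
  have hmem := Nat.sInf_mem hne
  obtain ⟨S, hScard, hSacyc⟩ := hmem
  obtain ⟨Xs, hl, hacyc⟩ := exists_decycling S D hD (lift_sub hSacyc)
  exact Nat.sInf_le ⟨Xs, by rw [hl, hScard]; rfl, hacyc⟩
end

section
/- For all n ≥ 1, inv(n) ≥ ⌊(n−1)/2 − log₂(n)⌋, where inv(n) is the maximum inversion number of an n-vertex tournament. More precisely, if k is an integer with 2^{n(n−1)/2} > n! · 2^{n(k−1)}, then inv(n) ≥ k. -/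
/-- The maximum inversion number of an `n`-vertex tournament. -/
noncomputable def maxInv (n : ℕ) : ℕ :=
  sSup {m | ∃ T : Fin n → Fin n → Prop, IsTournament T ∧ invNum T = m}

attribute [local instance] Classical.propDecidable

lemma invert_mem {V : Type*} {D : V → V → Prop} {X : Set V} {u v : V}
    (h : u ∈ X ∧ v ∈ X) : Invert D X u v ↔ D v u := by
  simp [Invert, h.1, h.2]

lemma invert_not_mem {V : Type*} {D : V → V → Prop} {X : Set V} {u v : V}
    (h : ¬(u ∈ X ∧ v ∈ X)) : Invert D X u v ↔ D u v := by
  unfold Invert; tauto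

lemma foldl_invert_iff {V : Type*} (Xs : List (Set V)) (D : V → V → Prop) (u v : V) :
    (Xs.foldl Invert D) u v ↔
      if Odd (Xs.countP fun X => decide (u ∈ X ∧ v ∈ X)) then D v u else D u v := by
  induction Xs generalizing D with
  | nil => simp
  | cons X Xs ih =>
    rw [List.foldl_cons, ih, List.countP_cons]
    by_cases h : u ∈ X ∧ v ∈ X
    · have h' : v ∈ X ∧ u ∈ X := ⟨h.2, h.1⟩
      have hc : (if (decide (u ∈ X ∧ v ∈ X)) = true then 1 else 0) = 1 := by simp [h]
      simp only [invert_mem h, invert_mem h', hc]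
      rcases Nat.even_or_odd (Xs.countP fun X => decide (u ∈ X) && decide (v ∈ X)) with he | ho
      · simp [Nat.not_odd_iff_even.mpr he, Even.add_one he]
      · simp [ho, Nat.not_odd_iff_even.mpr (Odd.add_one ho)]
    · have h' : ¬(v ∈ X ∧ u ∈ X) := fun hh => h ⟨hh.2, hh.1⟩
      have hc : (if (decide (u ∈ X ∧ v ∈ X)) = true then 1 else 0) = 0 := by simp [h]
      simp only [invert_not_mem h, invert_not_mem h', hc, Nat.add_zero]

lemma isTournament_invert {V : Type*} {D : V → V → Prop} (h : IsTournament D) (X : Set V) :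
    IsTournament (Invert D X) := by
  constructor
  · intro u v huv hvu
    by_cases hm : u ∈ X ∧ v ∈ X
    · rw [invert_mem hm] at huv
      rw [invert_mem ⟨hm.2, hm.1⟩] at hvu
      exact h.1 _ _ hvu huv
    · have hm' : ¬(v ∈ X ∧ u ∈ X) := fun hh => hm ⟨hh.2, hh.1⟩
      rw [invert_not_mem hm] at huv
      rw [invert_not_mem hm'] at hvu
      exact h.1 _ _ huv hvu
  · intro u v huv
    by_cases hm : u ∈ X ∧ v ∈ X
    · rcases h.2 u v huv with h1 | h1
      · exact Or.inr ((invert_mem ⟨hm.2, hm.1⟩).2 h1)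
      · exact Or.inl ((invert_mem hm).2 h1)
    · have hm' : ¬(v ∈ X ∧ u ∈ X) := fun hh => hm ⟨hh.2, hh.1⟩
      rcases h.2 u v huv with h1 | h1
      · exact Or.inl ((invert_not_mem hm).2 h1)
      · exact Or.inr ((invert_not_mem hm').2 h1)

lemma isTournament_foldl {V : Type*} {D : V → V → Prop} (h : IsTournament D)
    (Xs : List (Set V)) : IsTournament (Xs.foldl Invert D) := by
  induction Xs generalizing D with
  | nil => exact h
  | cons X Xs ih => exact ih (isTournament_invert h X)

lemma invert_empty {V : Type*} (D : V → V → Prop) : Invert D (∅ : Set V) = D := by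
  funext u v
  simp [Invert]

lemma foldl_replicate_empty {V : Type*} (m : ℕ) (D : V → V → Prop) :
    (List.replicate m (∅ : Set V)).foldl Invert D = D := by
  induction m generalizing D with
  | zero => rfl
  | succ m ih => rw [List.replicate_succ, List.foldl_cons, invert_empty, ih]

lemma countP_eq_of_imp {α : Type*} {l : List α} (hl : l.Nodup) (p : α → Bool) (a : α)
    (h : ∀ x ∈ l, p x = true → x = a) :
    l.countP p = if a ∈ l ∧ p a then 1 else 0 := by
  classical
  induction l with
  | nil => simp
  | cons b l ih =>
    rw [List.countP_cons,
      ih hl.of_cons (fun x hx hp => h x (List.mem_cons_of_mem _ hx) hp)]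
    by_cases hb : p b = true
    · have hba := h b List.mem_cons_self hb
      subst hba
      have : b ∉ l := (List.nodup_cons.mp hl).1
      simp [hb, this]
    · by_cases hba : a = b
      · subst hba
        simp [hb]
      · simp only [List.mem_cons]
        by_cases hal : a ∈ l ∧ p a = true
        · simp [hal, hba, hb]
        · simp only [hb, if_false, add_zero]
          by_cases h1 : a ∈ l <;> by_cases h2 : p a = true <;> simp_all

lemma exists_decycling_s13 {n : ℕ} {T : Fin n → Fin n → Prop} (hT : IsTournament T) :
    ∃ Xs : List (Set (Fin n)),
      Xs.length = ((Finset.univ : Finset (Fin n × Fin n)).filter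
        (fun p => p.1 < p.2)).toList.length ∧
      IsAcyclic (Xs.foldl Invert T) := by
  classical
  set pl := ((Finset.univ : Finset (Fin n × Fin n)).filter (fun p => p.1 < p.2)).toList with hpl
  have hplnd : pl.Nodup := Finset.nodup_toList _
  have hplmem : ∀ p : Fin n × Fin n, p ∈ pl ↔ p.1 < p.2 := by
    intro p
    rw [hpl, Finset.mem_toList, Finset.mem_filter]
    simp
  set f : Fin n × Fin n → Set (Fin n) :=
    fun p => if T p.2 p.1 then ({p.1, p.2} : Set (Fin n)) else ∅ with hf
  refine ⟨pl.map f, by rw [List.length_map], ?_⟩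
  have noloop : ∀ u : Fin n, ¬ T u u := fun u h => hT.1 u u h h
  have key : ∀ u v : Fin n, ((pl.map f).foldl Invert T) u v ↔ u < v := by
    intro u v
    rw [foldl_invert_iff]
    have hcm : ((pl.map f).countP fun X => decide (u ∈ X ∧ v ∈ X)) =
        pl.countP fun p => decide (u ∈ f p ∧ v ∈ f p) := by
      rw [List.countP_map]; rfl
    rcases eq_or_ne u v with rfl | hne
    · split <;> simp [noloop u, lt_irrefl]
    · have hmem : ∀ p ∈ pl, (u ∈ f p ∧ v ∈ f p) → p = (u, v) ∨ p = (v, u) := by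
        intro p hp hm
        by_cases hb : T p.2 p.1
        · simp only [hf, hb, if_true, Set.mem_insert_iff, Set.mem_singleton_iff] at hm
          rcases hm with ⟨hu | hu, hv | hv⟩
          · exact absurd (hu.trans hv.symm) hne
          · left; rw [Prod.ext_iff]; exact ⟨hu.symm, hv.symm⟩
          · right; rw [Prod.ext_iff]; exact ⟨hv.symm, hu.symm⟩
          · exact absurd (hu.trans hv.symm) hne
        · simp [hf, hb] at hm
      rcases hne.lt_or_gt with hlt | hlt
      · -- u < v : target (u,v)
        have himp : ∀ p ∈ pl, (decide (u ∈ f p ∧ v ∈ f p)) = true → p = (u, v) := by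
          intro p hp hd
          rw [decide_eq_true_iff] at hd
          rcases hmem p hp hd with h | h
          · exact h
          · exfalso
            have := (hplmem p).1 hp
            rw [h] at this
            exact absurd hlt (asymm this)
        rw [hcm, countP_eq_of_imp hplnd _ (u, v) himp]
        have hmem2 : (u, v) ∈ pl := (hplmem (u, v)).2 hlt
        by_cases hb : T v u
        · have hin : u ∈ f (u, v) ∧ v ∈ f (u, v) := by simp [hf, hb]
          simp [hmem2, hin, hb, hlt]
        · have hin : ¬(u ∈ f (u, v) ∧ v ∈ f (u, v)) := by simp [hf, hb]
          have htuv : T u v := (hT.2 u v hne).resolve_right (fun h => hb h)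
          simp [hin, htuv, hlt]
      · -- v < u : target (v,u)
        have himp : ∀ p ∈ pl, (decide (u ∈ f p ∧ v ∈ f p)) = true → p = (v, u) := by
          intro p hp hd
          rw [decide_eq_true_iff] at hd
          rcases hmem p hp hd with h | h
          · exfalso
            have := (hplmem p).1 hp
            rw [h] at this
            exact absurd hlt (asymm this)
          · exact h
        rw [hcm, countP_eq_of_imp hplnd _ (v, u) himp]
        have hmem2 : (v, u) ∈ pl := (hplmem (v, u)).2 hlt
        have hnlt : ¬ u < v := asymm hlt
        by_cases hb : T u v
        · have hin : u ∈ f (v, u) ∧ v ∈ f (v, u) := by simp [hf, hb]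
          have hntvu : ¬ T v u := hT.1 u v hb
          simp [hmem2, hin, hntvu, hnlt]
        · have hin : ¬(u ∈ f (v, u) ∧ v ∈ f (v, u)) := by simp [hf, hb]
          simp [hin, hb, hnlt]
  intro x hx
  have hx' : Relation.TransGen (fun a b : Fin n => a < b) x x :=
    Relation.TransGen.mono (fun a b h => (key a b).1 h) x x hx
  have heq : Relation.TransGen (fun a b : Fin n => a < b) = fun a b : Fin n => a < b :=
    Relation.transGen_eq_self
  rw [heq] at hx'
  exact lt_irrefl x hx'

lemma card_lt_pairs (n : ℕ) :
    Fintype.card {p : Fin n × Fin n // p.1 < p.2} = n * (n - 1) / 2 := by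
  have e : {p : Fin n × Fin n // p.1 < p.2} ≃ Σ i : Fin n, Fin i.1 :=
    { toFun := fun p => ⟨p.1.2, ⟨p.1.1.1, p.2⟩⟩
      invFun := fun x => ⟨(⟨x.2.1, lt_trans x.2.isLt x.1.isLt⟩, x.1), x.2.isLt⟩
      left_inv := fun p => rfl
      right_inv := fun x => rfl }
  rw [Fintype.card_congr e, Fintype.card_sigma]
  simp only [Fintype.card_fin]
  rw [Fin.sum_univ_eq_sum_range (fun i => i), Finset.sum_range_id]

lemma card_tournaments_lower (n : ℕ) :
    2 ^ (n * (n - 1) / 2) ≤ Fintype.card {D : Fin n → Fin n → Prop // IsTournament D} := by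
  classical
  set ι : ({p : Fin n × Fin n // p.1 < p.2} → Bool) →
      {D : Fin n → Fin n → Prop // IsTournament D} :=
    fun g => ⟨fun u v => (∃ h : u < v, g ⟨(u, v), h⟩ = true) ∨
        (∃ h : v < u, g ⟨(v, u), h⟩ = false), by
      constructor
      · rintro u v (⟨h1, hg1⟩ | ⟨h1, hg1⟩) (⟨h2, hg2⟩ | ⟨h2, hg2⟩)
        · exact absurd h2 (asymm h1)
        · rw [hg1] at hg2; simp at hg2
        · rw [hg1] at hg2; simp at hg2
        · exact absurd h2 (asymm h1)
      · intro u v hne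
        rcases hne.lt_or_gt with h | h
        · cases hg : g ⟨(u, v), h⟩
          · exact Or.inr (Or.inr ⟨h, hg⟩)
          · exact Or.inl (Or.inl ⟨h, hg⟩)
        · cases hg : g ⟨(v, u), h⟩
          · exact Or.inl (Or.inr ⟨h, hg⟩)
          · exact Or.inr (Or.inl ⟨h, hg⟩)⟩ with hι
  have hval : ∀ g (p : {p : Fin n × Fin n // p.1 < p.2}),
      (ι g).1 p.1.1 p.1.2 ↔ g p = true := by
    intro g p
    have hpe : ∀ h, (⟨(p.1.1, p.1.2), h⟩ : {p : Fin n × Fin n // p.1 < p.2}) = p :=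
      fun h => Subtype.ext rfl
    constructor
    · rintro (⟨h1, hg1⟩ | ⟨h1, hg1⟩)
      · rwa [hpe] at hg1
      · exact absurd h1 (asymm p.2)
    · intro hg
      exact Or.inl ⟨p.2, by rwa [hpe]⟩
  have hinj : Function.Injective ι := by
    intro g1 g2 hg
    funext p
    have h1 := hval g1 p
    have h2 := hval g2 p
    rw [hg] at h1
    have : g1 p = true ↔ g2 p = true := h1.symm.trans h2
    cases hp1 : g1 p <;> cases hp2 : g2 p <;> simp_all
  have := Fintype.card_le_of_injective ι hinj
  rwa [Fintype.card_fun, Fintype.card_bool, card_lt_pairs] at this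

lemma card_acyclic_le (n : ℕ) :
    Fintype.card {D : Fin n → Fin n → Prop // IsTournament D ∧ IsAcyclic D} ≤
      n.factorial := by
  classical
  -- transitivity of acyclic tournaments
  have htrans : ∀ (D : Fin n → Fin n → Prop), IsTournament D → IsAcyclic D →
      ∀ {u v w}, D u v → D v w → D u w := by
    intro D hT hA u v w huv hvw
    have hne : u ≠ w := by
      rintro rfl
      exact hT.1 u v huv hvw
    have hnwu : ¬ D w u := by
      intro hwu
      exact hA u (Relation.TransGen.head huv
        (Relation.TransGen.head hvw (Relation.TransGen.single hwu)))
    exact (hT.2 u w hne).resolve_right hnwu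
  set indeg : {D : Fin n → Fin n → Prop // IsTournament D ∧ IsAcyclic D} → Fin n → Fin n :=
    fun A v => ⟨(Finset.univ.filter (fun u => A.1 u v)).card, by
      have hsub : Finset.univ.filter (fun u => A.1 u v) ⊆ Finset.univ.erase v := by
        intro u hu
        rw [Finset.mem_filter] at hu
        refine Finset.mem_erase.mpr ⟨?_, Finset.mem_univ _⟩
        rintro rfl
        exact A.2.1.1 _ _ hu.2 hu.2
      calc (Finset.univ.filter (fun u => A.1 u v)).card
          ≤ (Finset.univ.erase v).card := Finset.card_le_card hsub
        _ = n - 1 := by rw [Finset.card_erase_of_mem (Finset.mem_univ _), Finset.card_univ,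
            Fintype.card_fin]
        _ < n := by have := v.pos; omega⟩ with hindeg
  have hmono : ∀ A u v, A.1 u v → indeg A u < indeg A v := by
    intro A u v huv
    have hsub : Finset.univ.filter (fun w => A.1 w u) ⊂ Finset.univ.filter (fun w => A.1 w v) := by
      constructor
      · intro w hw
        rw [Finset.mem_filter] at hw ⊢
        exact ⟨Finset.mem_univ _, htrans A.1 A.2.1 A.2.2 hw.2 huv⟩
      · intro hsub'
        have hu : u ∈ Finset.univ.filter (fun w => A.1 w v) :=
          Finset.mem_filter.mpr ⟨Finset.mem_univ _, huv⟩
        have := Finset.mem_filter.mp (hsub' hu)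
        exact A.2.1.1 u u this.2 this.2
    exact Finset.card_lt_card hsub
  have hiff : ∀ A u v, A.1 u v ↔ indeg A u < indeg A v := by
    intro A u v
    refine ⟨hmono A u v, fun h => ?_⟩
    have hne : u ≠ v := by
      rintro rfl
      exact lt_irrefl _ h
    rcases A.2.1.2 u v hne with h1 | h1
    · exact h1
    · exact absurd (hmono A v u h1) (asymm h)
  have hinj2 : ∀ A, Function.Injective (indeg A) := by
    intro A u v h
    by_contra hne
    rcases A.2.1.2 u v hne with h1 | h1
    · exact absurd (hmono A u v h1) (by rw [h]; exact lt_irrefl _)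
    · exact absurd (hmono A v u h1) (by rw [h]; exact lt_irrefl _)
  set Ψ : {D : Fin n → Fin n → Prop // IsTournament D ∧ IsAcyclic D} → (Fin n ↪ Fin n) :=
    fun A => ⟨indeg A, hinj2 A⟩ with hΨ
  have hinj : Function.Injective Ψ := by
    intro A B hAB
    have hfun : indeg A = indeg B := congr_arg (fun e => (e : Fin n ↪ Fin n).toFun) hAB
    apply Subtype.ext
    funext u v
    apply propext
    rw [hiff A u v, hiff B u v, hfun]
  have := Fintype.card_le_of_injective Ψ hinj
  rwa [Fintype.card_embedding_eq, Fintype.card_fin, Nat.descFactorial_self] at this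

lemma ofFn_getD {α : Type*} [Inhabited α] {m : ℕ} (l : List α) (hl : l.length = m) :
    List.ofFn (fun i : Fin m => l.getD i.val default) = l := by
  apply List.ext_getElem
  · rw [List.length_ofFn, hl]
  · intro i h1 h2
    rw [List.getElem_ofFn]
    exact List.getD_eq_getElem l default h2

lemma card_tournaments_upper {n m : ℕ}
    (h : ∀ D : Fin n → Fin n → Prop, IsTournament D →
      ∃ Xs : List (Set (Fin n)), Xs.length = m ∧ IsAcyclic (Xs.foldl Invert D)) :
    Fintype.card {D : Fin n → Fin n → Prop // IsTournament D} ≤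
      n.factorial * 2 ^ (n * m) := by
  classical
  set Φ : ({D : Fin n → Fin n → Prop // IsTournament D ∧ IsAcyclic D} ×
      (Fin m → Set (Fin n))) → {D : Fin n → Fin n → Prop // IsTournament D} :=
    fun Ag => ⟨(List.ofFn Ag.2).foldl Invert Ag.1.1, isTournament_foldl Ag.1.2.1 _⟩ with hΦ
  have hsurj : Function.Surjective Φ := by
    rintro ⟨D, hD⟩
    obtain ⟨Xs, hlen, hacyc⟩ := h D hD
    set A := Xs.foldl Invert D with hA
    have hATour : IsTournament A := isTournament_foldl hD Xs
    set g : Fin m → Set (Fin n) := fun i => Xs.reverse.getD i.val default with hg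
    have hofn : List.ofFn g = Xs.reverse :=
      ofFn_getD Xs.reverse (by rw [List.length_reverse, hlen])
    refine ⟨⟨⟨A, hATour, hacyc⟩, g⟩, ?_⟩
    apply Subtype.ext
    show (List.ofFn g).foldl Invert A = D
    rw [hofn]
    funext u v
    apply propext
    have hsymm : ∀ (Ys : List (Set (Fin n))) (a b : Fin n),
        (Ys.countP fun X => decide (a ∈ X ∧ b ∈ X)) =
        (Ys.countP fun X => decide (b ∈ X ∧ a ∈ X)) := by
      intro Ys a b
      apply List.countP_congr
      intro X _
      simp [and_comm]
    rw [foldl_invert_iff]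
    have h1 := foldl_invert_iff Xs D u v
    have h2 := foldl_invert_iff Xs D v u
    rw [List.countP_reverse]
    rcases Nat.even_or_odd (Xs.countP fun X => decide (u ∈ X ∧ v ∈ X)) with he | ho
    · have hne : ¬ Odd (Xs.countP fun X => decide (u ∈ X ∧ v ∈ X)) :=
        Nat.not_odd_iff_even.mpr he
      rw [if_neg hne]
      rw [if_neg hne] at h1
      exact h1
    · rw [if_pos ho]
      rw [hsymm Xs v u] at h2
      rw [if_pos ho] at h2
      exact h2
  have hcard := Fintype.card_le_of_surjective Φ hsurj
  calc Fintype.card {D : Fin n → Fin n → Prop // IsTournament D}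
      ≤ Fintype.card ({D : Fin n → Fin n → Prop // IsTournament D ∧ IsAcyclic D} ×
        (Fin m → Set (Fin n))) := hcard
    _ = Fintype.card {D : Fin n → Fin n → Prop // IsTournament D ∧ IsAcyclic D} *
        Fintype.card (Fin m → Set (Fin n)) := Fintype.card_prod _ _
    _ ≤ n.factorial * 2 ^ (n * m) := by
        apply Nat.mul_le_mul (card_acyclic_le n)
        rw [Fintype.card_fun, Fintype.card_set, Fintype.card_fin, Fintype.card_fin, ← pow_mul]

/-- If `2^{n(n−1)/2} > n! · 2^{n(k−1)}` then `inv(n) ≥ k`; consequently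
`inv(n) ≥ ⌊(n−1)/2 − log₂ n⌋`. -/
theorem maxInv_lower_bound (n : ℕ) (hn : 1 ≤ n) :
    (∀ k : ℕ, 1 ≤ k →
      n.factorial * 2 ^ (n * (k - 1)) < 2 ^ (n * (n - 1) / 2) →
      k ≤ maxInv n) ∧
    ⌊((n : ℝ) - 1) / 2 - Real.logb 2 n⌋ ≤ (maxInv n : ℤ) := by
  classical
  set B := ((Finset.univ : Finset (Fin n × Fin n)).filter (fun p => p.1 < p.2)).toList.length
    with hB
  have hbdd : BddAbove {m | ∃ T : Fin n → Fin n → Prop, IsTournament T ∧ invNum T = m} := by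
    refine ⟨B, ?_⟩
    rintro m ⟨T, hT, rfl⟩
    obtain ⟨Xs, hlen, hacyc⟩ := exists_decycling_s13 hT
    exact Nat.sInf_le ⟨Xs, hlen, hacyc⟩
  have part1 : ∀ k : ℕ, 1 ≤ k →
      n.factorial * 2 ^ (n * (k - 1)) < 2 ^ (n * (n - 1) / 2) → k ≤ maxInv n := by
    intro k hk hcard
    by_contra hcon
    push_neg at hcon
    have hall : ∀ D : Fin n → Fin n → Prop, IsTournament D →
        ∃ Xs : List (Set (Fin n)), Xs.length = k - 1 ∧ IsAcyclic (Xs.foldl Invert D) := by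
      intro D hD
      have hmem : invNum D ∈ {j | ∃ Xs : List (Set (Fin n)),
          Xs.length = j ∧ IsAcyclic (Xs.foldl Invert D)} := by
        apply Nat.sInf_mem
        obtain ⟨Xs, hlen, hacyc⟩ := exists_decycling_s13 hD
        exact ⟨_, Xs, hlen, hacyc⟩
      obtain ⟨Xs, hlen, hacyc⟩ := hmem
      have hle : invNum D ≤ k - 1 := by
        have h1 : invNum D ≤ maxInv n := le_csSup hbdd ⟨D, hD, rfl⟩
        omega
      refine ⟨List.replicate (k - 1 - Xs.length) ∅ ++ Xs, ?_, ?_⟩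
      · rw [List.length_append, List.length_replicate]
        omega
      · rw [List.foldl_append, foldl_replicate_empty]
        exact hacyc
    have hup := card_tournaments_upper hall
    have hlo := card_tournaments_lower n
    exact lt_irrefl _ ((hlo.trans hup).trans_lt hcard)
  refine ⟨part1, ?_⟩
  have hn0 : (0 : ℝ) < n := by exact_mod_cast hn
  set z := ⌊((n : ℝ) - 1) / 2 - Real.logb 2 n⌋ with hz
  rcases le_or_gt z 0 with hz0 | hz1
  · exact hz0.trans (Int.natCast_nonneg _)
  · set k := z.toNat with hk
    have hk1 : 1 ≤ k := by omega
    have hzk : z = (k : ℤ) := (Int.toNat_of_nonneg hz1.le).symm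
    have hkr : (k : ℝ) ≤ ((n : ℝ) - 1) / 2 - Real.logb 2 n := by
      have hfl := Int.floor_le (((n : ℝ) - 1) / 2 - Real.logb 2 n)
      rw [← hz] at hfl
      calc (k : ℝ) = ((z : ℤ) : ℝ) := by exact_mod_cast congrArg (Int.cast : ℤ → ℝ) hzk.symm
        _ ≤ _ := hfl
    set E := n * (n - 1) / 2 with hE
    have heven : Even (n * (n - 1)) := by
      have h2 := Nat.even_mul_succ_self (n - 1)
      rw [Nat.sub_add_cancel hn] at h2
      rwa [mul_comm] at h2
    have hEeq : E * 2 = n * (n - 1) := Nat.div_mul_cancel heven.two_dvd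
    have hEr : (E : ℝ) = (n : ℝ) * ((n : ℝ) - 1) / 2 := by
      have := congrArg (Nat.cast : ℕ → ℝ) hEeq
      push_cast [Nat.cast_sub hn] at this
      linarith
    set a := Real.logb 2 n with ha
    have hnum : n.factorial * 2 ^ (n * (k - 1)) < 2 ^ E := by
      have e0 : (2 : ℝ) ^ (a * ((n : ℕ) : ℝ)) = (n : ℝ) ^ (n : ℕ) := by
        rw [Real.rpow_mul (by norm_num : (0:ℝ) ≤ 2),
          Real.rpow_logb (by norm_num) (by norm_num) hn0, Real.rpow_natCast]
      have e2 : (2 : ℝ) ^ (((n * (k - 1) : ℕ)) : ℝ) = (2 : ℝ) ^ (n * (k - 1) : ℕ) :=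
        Real.rpow_natCast _ _
      have e3 : (2 : ℝ) ^ ((E : ℕ) : ℝ) = (2 : ℝ) ^ (E : ℕ) := Real.rpow_natCast _ _
      have hexp : a * ((n : ℕ) : ℝ) + ((n * (k - 1) : ℕ) : ℝ) < ((E : ℕ) : ℝ) := by
        rw [hEr]
        push_cast [Nat.cast_sub hk1]
        nlinarith [mul_le_mul_of_nonneg_left hkr hn0.le]
      have hR : (n.factorial : ℝ) * 2 ^ (n * (k - 1)) < (2 : ℝ) ^ E := by
        calc (n.factorial : ℝ) * 2 ^ (n * (k - 1))
            ≤ ((n : ℝ) ^ (n : ℕ)) * 2 ^ (n * (k - 1)) := by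
              apply mul_le_mul_of_nonneg_right _ (by positivity)
              exact_mod_cast Nat.factorial_le_pow n
          _ = (2 : ℝ) ^ (a * ((n : ℕ) : ℝ)) * (2 : ℝ) ^ (((n * (k - 1) : ℕ)) : ℝ) := by
              rw [e0, e2]
          _ = (2 : ℝ) ^ (a * ((n : ℕ) : ℝ) + ((n * (k - 1) : ℕ) : ℝ)) :=
              (Real.rpow_add (by norm_num) _ _).symm
          _ < (2 : ℝ) ^ ((E : ℕ) : ℝ) := by
              rw [Real.rpow_lt_rpow_left_iff (by norm_num : (1:ℝ) < 2)]
              exact hexp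
          _ = (2 : ℝ) ^ (E : ℕ) := e3
      exact_mod_cast hR
    have hk2 := part1 k hk1 hnum
    rw [hzk]
    exact_mod_cast hk2
end
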